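/- arXiv:2605.16096 — 2 statements merged into one kernel-verified Lean document; each statement's English description precedes it below -/
import Mathlib

section
/- Let X be a median algebra and let [x,y] be a chain interval ordered by ≤_x. If z ∈ [x,y] with z ≠ y, then the shadows coincide: S^x_y = S^z_y, i.e., for every w ∈ X, y ∈ [x,w] if and only if y ∈ [z,w]. Equivalently, B^x_y = B^z_y. -/
/-- A median algebra: a set with a ternary operation `m` that is symmetric
(generated by the two transpositions), satisfies `m a b b = b`, and
`m (m a b d) c d = m (m a c d) b d`. -/
structure MedianAlgebra (X : Type*) where
  m : X → X → X → X
  swap12 : ∀ a b c, m a b c = m b a c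
  swap23 : ∀ a b c, m a b c = m a c b
  absorb : ∀ a b, m a b b = b
  med_assoc : ∀ a b c d, m (m a b d) c d = m (m a c d) b d

namespace MedianAlgebra

variable {X : Type*}

/-- The median interval `[a,b] = {c : m a c b = c}`. -/
def interval (M : MedianAlgebra X) (a b : X) : Set X := {c | M.m a c b = c}

/-- A subset is convex if it contains the interval between any two of its points. -/
def IsConvex (M : MedianAlgebra X) (C : Set X) : Prop :=
  ∀ x ∈ C, ∀ y ∈ C, M.interval x y ⊆ C

/-- The shadow `S^a_b = {w : m a w b = b}` (i.e. `b ∈ [a,w]`). -/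
def shadow (M : MedianAlgebra X) (a b : X) : Set X := {w | M.m a w b = b}

/-- The branch `B^a_b = {w : m a w b ≠ b}`, complement of the shadow. -/
def branch (M : MedianAlgebra X) (a b : X) : Set X := {w | M.m a w b ≠ b}

/-- The relation `x ≤_u y` iff `m u x y = x`. -/
def leI (M : MedianAlgebra X) (u x y : X) : Prop := M.m u x y = x

/-- `[u,v]` is a chain interval: `≤_u` is total on `[u,v]` and the
order-median induced by `≤_u` agrees with `m` on `[u,v]`. -/
def IsChainInterval (M : MedianAlgebra X) (u v : X) : Prop :=
  (∀ x ∈ M.interval u v, ∀ y ∈ M.interval u v, M.leI u x y ∨ M.leI u y x) ∧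
  (∀ x ∈ M.interval u v, ∀ y ∈ M.interval u v, ∀ z ∈ M.interval u v,
      M.leI u x y → M.leI u y z → M.m x y z = y)

end MedianAlgebra

open MedianAlgebra

lemma MedianAlgebra.absorb' {X : Type*} (M : MedianAlgebra X) (a b : X) :
    M.m a a b = a := by
  rw [M.swap23, M.swap12, M.absorb]

/-- Branch equivalence: if `[x,y]` is a chain interval and `z ∈ [x,y)`, then
the shadows and branches from the pair `(x,y)` and `(z,y)` coincide. -/
theorem branch_equivalence {X : Type*} (M : MedianAlgebra X) (x y z : X)
    (hch : M.IsChainInterval x y) (hz : z ∈ M.interval x y) (hzy : z ≠ y) :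
    M.shadow x y = M.shadow z y ∧ M.branch x y = M.branch z y := by
  have hz' : M.m x z y = z := hz
  have key : ∀ w, M.m x w y = y ↔ M.m z w y = y := by
    intro w
    constructor
    · intro hw
      have := M.med_assoc x z w y
      rw [hz', hw] at this
      rw [this, M.swap12, M.absorb]
    · intro hw
      -- p = m x w y lies in [x,y]
      set p := M.m x w y with hp
      have hpI : p ∈ M.interval x y := by
        show M.m x p y = p
        rw [M.swap12 x p y, hp, M.med_assoc x w x y, M.absorb' x y]
      have hyI : y ∈ M.interval x y := M.absorb x y
      -- m p z y = y
      have hpzy : M.m p z y = y := by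
        show M.m (M.m x w y) z y = y
        rw [M.med_assoc x w z y, hz', hw]
      have hzley : M.leI x z y := hz'
      have hpley : M.leI x p y := hpI
      rcases hch.1 p hpI z hz with hpz | hzp
      · exfalso
        have := hch.2 p hpI z hz y hyI hpz hzley
        exact hzy (by rw [← this, hpzy])
      · have := hch.2 z hz p hpI y hyI hzp hpley
        have h2 : M.m z p y = y := (M.swap12 z p y).trans hpzy
        show M.m x w y = y
        rw [← hp, ← this, h2]
  have hset : M.shadow x y = M.shadow z y := Set.ext fun w => key w
  refine ⟨hset, Set.ext fun w => ?_⟩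
  simp only [branch, Set.mem_setOf_eq]
  exact not_congr (key w)
end

section
/- Let X be a median algebra in which every interval [x,y] is finite (an algebraically discrete median algebra). Then X is chain-solvable: for every pair of distinct points x,y there exist consecutive elements c ≤_x d in a maximal chain of the finite ordered interval ([x,y], ≤_x) such that [c,d] = {c,d}, a two-point chain interval. Consequently X satisfies the median T₂ property. -/
open MedianAlgebra

namespace MedianAlgebra

variable {X : Type*} (M : MedianAlgebra X)

lemma m_aab (a b : X) : M.m a a b = a := by
  rw [M.swap23, M.swap12, M.absorb]

lemma m_aba (a b : X) : M.m a b a = a := by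
  rw [M.swap12, M.absorb]

/-- If `c ∈ [x,d]` and `z ∈ [c,d]` then `z ∈ [x,d]`. -/
lemma trans1 {x c z d : X} (h1 : M.m x c d = c) (h2 : M.m c z d = z) :
    M.m x z d = z := by
  have h := M.med_assoc c z x d
  rw [h2, M.swap12 c x d, h1, h2] at h
  rw [M.swap12]
  exact h

/-- If `c ∈ [x,d]` and `d ∈ [x,y]` then `d ∈ [c,y]`. -/
lemma trans2 {x c d y : X} (h1 : M.m x c d = c) (h2 : M.m x d y = d) :
    M.m c d y = d := by
  have h := M.med_assoc x c y d
  rw [h1, M.swap23 x y d, h2, M.m_aba] at h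
  rw [M.swap23]
  exact h

lemma antisym {c z d : X} (h1 : M.m c z d = z) (h2 : M.m z c d = c) : c = z := by
  rw [← h2, M.swap12, h1]

end MedianAlgebra

/-- An algebraically discrete median algebra (all intervals finite) is
chain-solvable via a two-point (adjacent) chain interval; consequently it
satisfies the median T₂ property. -/
theorem aDiscrete_chainSolvable_and_medT2 {X : Type*} (M : MedianAlgebra X)
    (hfin : ∀ x y : X, (M.interval x y).Finite) :
    (∀ x y : X, x ≠ y → ∃ c d : X,
        c ∈ M.interval x y ∧ d ∈ M.interval x y ∧ c ≠ d ∧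
        M.leI x c d ∧ M.interval c d = {c, d}) ∧
    (∀ x y : X, x ≠ y → ∃ u v : X, u ≠ v ∧ M.IsChainInterval u v ∧
        ({M.m u x v, M.m u y v} : Set X) = {u, v}) := by
  classical
  have part1 : ∀ x y : X, x ≠ y → ∃ c d : X,
      c ∈ M.interval x y ∧ d ∈ M.interval x y ∧ c ≠ d ∧
      M.leI x c d ∧ M.interval c d = {c, d} := by
    intro x y hxy
    have hex : ∃ n : ℕ, ∃ c d : X,
        (M.m x c y = c ∧ M.m x d y = d ∧ M.m x c d = c ∧ c ≠ d) ∧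
        (hfin c d).toFinset.card = n :=
      ⟨(hfin x y).toFinset.card, x, y,
        ⟨M.m_aab x y, M.absorb x y, M.m_aab x y, hxy⟩, rfl⟩
    obtain ⟨c, d, ⟨hc, hd, hcd, hne⟩, hcard⟩ := Nat.find_spec hex
    refine ⟨c, d, hc, hd, hne, hcd, ?_⟩
    apply Set.eq_of_subset_of_subset
    · intro z hz
      by_contra hzmem
      simp only [Set.mem_insert_iff, Set.mem_singleton_iff] at hzmem
      push_neg at hzmem
      obtain ⟨hzc, hzd⟩ := hzmem
      have hz' : M.m c z d = z := hz
      -- z ≤_x d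
      have hxzd : M.m x z d = z := M.trans1 hcd hz'
      -- z ∈ [x,y]
      have hzy : M.m x z y = z := by
        have h1 : M.m y d x = d := by rw [M.swap12, M.swap23, M.swap12]; exact hd
        have h2 : M.m d z x = z := by rw [M.swap12, M.swap23, M.swap12]; exact hxzd
        have h3 := M.trans1 h1 h2
        rw [M.swap12, M.swap23, M.swap12]
        exact h3
      -- [z,d] ⊊ [c,d]
      have hsub : M.interval z d ⊆ M.interval c d := by
        intro w hw
        exact M.trans1 hz' hw
      have hcnot : c ∉ M.interval z d := by
        intro h
        exact hzc (M.antisym hz' h).symm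
      have hccd : c ∈ M.interval c d := M.m_aab c d
      have hss : (hfin z d).toFinset ⊂ (hfin c d).toFinset := by
        rw [Set.Finite.toFinset_ssubset_toFinset]
        exact (Set.ssubset_iff_of_subset hsub).mpr ⟨c, hccd, hcnot⟩
      have hlt : (hfin z d).toFinset.card < Nat.find hex :=
        hcard ▸ Finset.card_lt_card hss
      exact Nat.find_min hex hlt ⟨z, d, ⟨hzy, hd, hxzd, hzd⟩, rfl⟩
    · intro z hz
      rcases hz with hz | hz
      · subst hz; exact M.m_aab _ _
      · rw [Set.mem_singleton_iff] at hz
        subst hz; exact M.absorb _ _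
  refine ⟨part1, ?_⟩
  intro x y hxy
  obtain ⟨c, d, hc, hd, hne, hle, hcd⟩ := part1 x y hxy
  have hmem : ∀ w : X, w ∈ M.interval c d → w = c ∨ w = d := by
    intro w hw
    rw [hcd] at hw
    simpa using hw
  refine ⟨c, d, hne, ⟨?_, ?_⟩, ?_⟩
  · intro a ha b hb
    rcases hmem a ha with rfl | rfl <;> rcases hmem b hb with rfl | rfl
    · left; exact M.m_aab _ _
    · left; exact M.m_aab _ _
    · right; exact M.m_aab _ _
    · left; exact M.absorb _ _
  · intro a ha b hb e he h1 h2
    have h1' : M.m c a b = a := h1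
    have h2' : M.m c b e = b := h2
    rcases hmem a ha with rfl | rfl <;> rcases hmem b hb with rfl | rfl <;>
      rcases hmem e he with rfl | rfl
    · exact M.absorb _ _
    · exact M.m_aab _ _
    · exact absurd ((M.m_aba _ _).symm.trans h2') hne
    · exact M.absorb _ _
    · exact M.absorb _ _
    · exact absurd ((M.m_aba _ _).symm.trans h1') hne
    · exact absurd ((M.m_aba _ _).symm.trans h2') hne
    · exact M.absorb _ _
  · have h1 : M.m c x d = c := by rw [M.swap12]; exact hle
    have h2 : M.m c y d = d := by
      rw [M.swap23]
      exact M.trans2 hle hd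
    rw [h1, h2]
end
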